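/- arXiv:1511.00976 — 4 statements merged into one kernel-verified Lean document; each statement's English description precedes it below -/
import Mathlib

section
/- Every pair of quantum testers A and B of the same type is λ-compatible with λ = 1/2; that is, there exist noise testers N^A and N^B such that (1/2)A + (1/2)N^A and (1/2)B + (1/2)N^B are compatible. Consequently the robustness of incompatibility satisfies R(A,B) ≤ 1/2. -/
open Matrix Finset
open scoped Kronecker ComplexOrder

noncomputable section

variable {n m : Type*} [Fintype n] [DecidableEq n] [Fintype m] [DecidableEq m]

/-- A density operator: positive semidefinite with unit trace. -/
def IsDensity (ρ : Matrix n n ℂ) : Prop := ρ.PosSemidef ∧ ρ.trace = 1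

/-- A quantum tester on `H₁ ⊗ H₀` with normalization state `ρ` on `H₀`:
a family of positive semidefinite operators summing to `I₁ ⊗ ρ`. -/
def IsTester {S : Type*} [Fintype S] (T : S → Matrix (m × n) (m × n) ℂ)
    (ρ : Matrix n n ℂ) : Prop :=
  IsDensity ρ ∧ (∀ j, (T j).PosSemidef) ∧
    ∑ j, T j = (1 : Matrix m m ℂ) ⊗ₖ ρ

/-- Two testers are compatible if a joint tester with the correct marginals exists. -/
def TesterCompatible {S S' : Type*} [Fintype S] [Fintype S']
    (A : S → Matrix (m × n) (m × n) ℂ) (B : S' → Matrix (m × n) (m × n) ℂ) : Prop :=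
  ∃ (C : S × S' → Matrix (m × n) (m × n) ℂ) (τ : Matrix n n ℂ),
    IsTester C τ ∧ (∀ j, ∑ k, C (j, k) = A j) ∧ (∀ k, ∑ j, C (j, k) = B k)

/-- λ-compatibility of testers: noisy mixtures become compatible. -/
def TesterLambdaCompatible {S S' : Type*} [Fintype S] [Fintype S']
    (A : S → Matrix (m × n) (m × n) ℂ) (B : S' → Matrix (m × n) (m × n) ℂ)
    (lam : ℝ) : Prop :=
  ∃ (NA : S → Matrix (m × n) (m × n) ℂ) (NB : S' → Matrix (m × n) (m × n) ℂ)
    (ρ' σ' : Matrix n n ℂ), IsTester NA ρ' ∧ IsTester NB σ' ∧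
    TesterCompatible (fun j => (1 - lam) • A j + lam • NA j)
      (fun k => (1 - lam) • B k + lam • NB k)

/-- The robustness of incompatibility of two testers. -/
noncomputable def TesterRobustness {S S' : Type*} [Fintype S] [Fintype S']
    (A : S → Matrix (m × n) (m × n) ℂ) (B : S' → Matrix (m × n) (m × n) ℂ) : ℝ :=
  sInf {lam : ℝ | lam ∈ Set.Icc (0 : ℝ) 1 ∧ TesterLambdaCompatible A B lam}

/-- The robustness of state incompatibility. -/
noncomputable def StateRobustness (ρ σ : Matrix n n ℂ) : ℝ :=
  sInf {lam : ℝ | lam ∈ Set.Icc (0 : ℝ) 1 ∧ ∃ ρ' σ' : Matrix n n ℂ,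
    IsDensity ρ' ∧ IsDensity σ' ∧
    (1 - lam) • ρ + lam • ρ' = (1 - lam) • σ + lam • σ'}

/-- The trace norm of a matrix, as the sum of its singular values. -/
noncomputable def traceNorm (X : Matrix n n ℂ) : ℝ :=
  ∑ i, Real.sqrt ((Matrix.posSemidef_conjTranspose_mul_self X).1.eigenvalues i)

/-- Inverse of the square root of a Hermitian matrix, taken on its support. -/
noncomputable def invSqrt {ρ : Matrix n n ℂ} (hρ : ρ.IsHermitian) : Matrix n n ℂ :=
  (Matrix.IsHermitian.eigenvectorUnitary hρ : Matrix n n ℂ) *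
    Matrix.diagonal (fun i => if hρ.eigenvalues i = 0 then (0 : ℂ)
      else ((Real.sqrt (hρ.eigenvalues i))⁻¹ : ℝ)) *
    (Matrix.IsHermitian.eigenvectorUnitary hρ : Matrix n n ℂ)ᴴ

/-- Orthogonal projection onto the support of a Hermitian matrix. -/
noncomputable def suppProj {ρ : Matrix n n ℂ} (hρ : ρ.IsHermitian) : Matrix n n ℂ :=
  (Matrix.IsHermitian.eigenvectorUnitary hρ : Matrix n n ℂ) *
    Matrix.diagonal (fun i => if hρ.eigenvalues i = 0 then (0 : ℂ) else 1) *
    (Matrix.IsHermitian.eigenvectorUnitary hρ : Matrix n n ℂ)ᴴ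

/-- A POVM with unit `e`: positive semidefinite operators summing to `e`. -/
def IsPOVMOn {S : Type*} [Fintype S] (e : Matrix n n ℂ) (P : S → Matrix n n ℂ) : Prop :=
  (∀ j, (P j).PosSemidef) ∧ ∑ j, P j = e

/-- Compatibility of POVMs with unit `e`. -/
def POVMCompatibleOn {S S' : Type*} [Fintype S] [Fintype S'] (e : Matrix n n ℂ)
    (P : S → Matrix n n ℂ) (Q : S' → Matrix n n ℂ) : Prop :=
  ∃ R : S × S' → Matrix n n ℂ, IsPOVMOn e R ∧
    (∀ j, ∑ k, R (j, k) = P j) ∧ (∀ k, ∑ j, R (j, k) = Q k)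

/-- λ-compatibility of POVMs with unit `e`. -/
def POVMLambdaCompatibleOn {S S' : Type*} [Fintype S] [Fintype S'] (e : Matrix n n ℂ)
    (P : S → Matrix n n ℂ) (Q : S' → Matrix n n ℂ) (lam : ℝ) : Prop :=
  ∃ (JP : S → Matrix n n ℂ) (JQ : S' → Matrix n n ℂ),
    IsPOVMOn e JP ∧ IsPOVMOn e JQ ∧
    POVMCompatibleOn e (fun j => (1 - lam) • P j + lam • JP j)
      (fun k => (1 - lam) • Q k + lam • JQ k)

/-- The robustness of incompatibility of two POVMs with unit `e`. -/
noncomputable def POVMRobustnessOn {S S' : Type*} [Fintype S] [Fintype S'] (e : Matrix n n ℂ)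
    (P : S → Matrix n n ℂ) (Q : S' → Matrix n n ℂ) : ℝ :=
  sInf {lam : ℝ | lam ∈ Set.Icc (0 : ℝ) 1 ∧ POVMLambdaCompatibleOn e P Q lam}

/-- The canonical POVM associated with a tester with normalization state `ρ`. -/
noncomputable def canonicalPOVM {S : Type*} [Fintype S]
    (T : S → Matrix (m × n) (m × n) ℂ) {ρ : Matrix n n ℂ} (hρ : ρ.IsHermitian)
    (j : S) : Matrix (m × n) (m × n) ℂ :=
  ((1 : Matrix m m ℂ) ⊗ₖ invSqrt hρ) * T j * ((1 : Matrix m m ℂ) ⊗ₖ invSqrt hρ)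

end


section Aux
variable {d e : Type*} [Fintype d] [DecidableEq d] [Fintype e] [DecidableEq e]

lemma psd_add' {M N : Matrix d d ℂ} (hM : M.PosSemidef) (hN : N.PosSemidef) :
    (M + N).PosSemidef := by
  refine ⟨hM.1.add hN.1, fun x => ?_⟩
  simpa [mul_add, add_mul] using add_nonneg (hM.2 x) (hN.2 x)

lemma psd_smul' {M : Matrix d d ℂ} (hM : M.PosSemidef) {c : ℝ} (hc : 0 ≤ c) :
    (c • M).PosSemidef := by
  refine ⟨?_, fun x => ?_⟩
  · rw [Matrix.IsHermitian, conjTranspose_smul, star_trivial, hM.1.eq]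
  · exact (hM.smul hc).2 x

lemma kron_conjT (A : Matrix d d ℂ) (B : Matrix e e ℂ) :
    (A ⊗ₖ B)ᴴ = Aᴴ ⊗ₖ Bᴴ := by
  ext ⟨i, j⟩ ⟨k, l⟩
  simp [conjTranspose_apply, Matrix.kroneckerMap_apply, mul_comm]

lemma psd_one_kron {ρ : Matrix e e ℂ} (hρ : ρ.PosSemidef) :
    ((1 : Matrix d d ℂ) ⊗ₖ ρ).PosSemidef := by
  obtain ⟨Bm, hB⟩ : ∃ Bm : Matrix e e ℂ, ρ = Bmᴴ * Bm := by
    open scoped MatrixOrder Matrix.Norms.L2Operator in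
    obtain ⟨a, ha⟩ := CStarAlgebra.nonneg_iff_eq_star_mul_self.mp hρ.nonneg
    exact ⟨a, ha⟩
  have : (1 : Matrix d d ℂ) ⊗ₖ ρ = ((1 : Matrix d d ℂ) ⊗ₖ Bm)ᴴ * ((1 : Matrix d d ℂ) ⊗ₖ Bm) := by
    rw [kron_conjT, conjTranspose_one, ← Matrix.mul_kronecker_mul, one_mul, ← hB]
  rw [this]
  exact Matrix.posSemidef_conjTranspose_mul_self _

end Aux

/-- every pair of testers of the same type is λ-compatible with
`λ = 1/2`, hence the robustness of incompatibility is at most `1/2`. -/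


theorem stmt6 {n m : Type*} [Fintype n] [DecidableEq n] [Fintype m] [DecidableEq m]
    {S S' : Type*} [Fintype S] [Fintype S']
    (A : S → Matrix (m × n) (m × n) ℂ) (B : S' → Matrix (m × n) (m × n) ℂ)
    (ρ σ : Matrix n n ℂ) (hA : IsTester A ρ) (hB : IsTester B σ) :
    TesterLambdaCompatible A B (1/2) ∧ TesterRobustness A B ≤ 1/2 := by
  have hcompat : TesterLambdaCompatible A B (1/2) := by
    obtain ⟨hρd, hApsd, hAsum⟩ := hA
    obtain ⟨hσd, hBpsd, hBsum⟩ := hB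
    rcases isEmpty_or_nonempty m with hm | hm
    · haveI : IsEmpty (m × n) := ⟨fun p => hm.false p.1⟩
      haveI : Unique (Matrix (m × n) (m × n) ℂ) := ⟨⟨0⟩, fun a => by ext i j; exact (IsEmpty.false i).elim⟩
      refine ⟨A, B, ρ, σ, ⟨hρd, hApsd, hAsum⟩, ⟨hσd, hBpsd, hBsum⟩,
        fun _ => 0, ρ, ⟨hρd, fun _ => Matrix.PosSemidef.zero, Subsingleton.elim _ _⟩,
        fun j => Subsingleton.elim _ _, fun k => Subsingleton.elim _ _⟩
    · -- m nonempty: S, S' are nonempty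
      haveI hS : Nonempty S := by
        by_contra h
        rw [not_nonempty_iff] at h
        have h0 : (∑ j, A j) = 0 := by simp
        have := congrArg Matrix.trace (h0.symm.trans hAsum)
        rw [Matrix.trace_zero, Matrix.trace_kronecker, Matrix.trace_one, hρd.2, mul_one] at this
        exact Fintype.card_ne_zero (α := m) (by exact_mod_cast this.symm)
      haveI hS' : Nonempty S' := by
        by_contra h
        rw [not_nonempty_iff] at h
        have h0 : (∑ k, B k) = 0 := by simp
        have := congrArg Matrix.trace (h0.symm.trans hBsum)
        rw [Matrix.trace_zero, Matrix.trace_kronecker, Matrix.trace_one, hσd.2, mul_one] at this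
        exact Fintype.card_ne_zero (α := m) (by exact_mod_cast this.symm)
      have hcS : (Fintype.card S : ℝ) ≠ 0 := Nat.cast_ne_zero.mpr Fintype.card_ne_zero
      have hcS' : (Fintype.card S' : ℝ) ≠ 0 := Nat.cast_ne_zero.mpr Fintype.card_ne_zero
      set NA : S → Matrix (m × n) (m × n) ℂ :=
        fun _ => ((Fintype.card S : ℝ)⁻¹) • ((1 : Matrix m m ℂ) ⊗ₖ σ) with hNA
      set NB : S' → Matrix (m × n) (m × n) ℂ :=
        fun _ => ((Fintype.card S' : ℝ)⁻¹) • ((1 : Matrix m m ℂ) ⊗ₖ ρ) with hNB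
      set C : S × S' → Matrix (m × n) (m × n) ℂ :=
        fun jk => ((2 * Fintype.card S' : ℝ)⁻¹) • A jk.1
          + ((2 * Fintype.card S : ℝ)⁻¹) • B jk.2 with hC
      set τ : Matrix n n ℂ := ((2 : ℝ)⁻¹) • (ρ + σ) with hτ
      refine ⟨NA, NB, σ, ρ, ?_, ?_, C, τ, ⟨?_, ?_, ?_⟩, ?_, ?_⟩
      · refine ⟨hσd, fun _ => psd_smul' (psd_one_kron hσd.1) (by positivity), ?_⟩
        rw [Finset.sum_const, Finset.card_univ, ← Nat.cast_smul_eq_nsmul ℝ, smul_smul,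
          mul_inv_cancel₀ hcS, one_smul]
      · refine ⟨hρd, fun _ => psd_smul' (psd_one_kron hρd.1) (by positivity), ?_⟩
        rw [Finset.sum_const, Finset.card_univ, ← Nat.cast_smul_eq_nsmul ℝ, smul_smul,
          mul_inv_cancel₀ hcS', one_smul]
      · refine ⟨psd_smul' (psd_add' hρd.1 hσd.1) (by norm_num), ?_⟩
        rw [hτ, Matrix.trace_smul, Matrix.trace_add, hρd.2, hσd.2]
        norm_num [Complex.real_smul]
      · exact fun jk => psd_add' (psd_smul' (hApsd jk.1) (by positivity))
          (psd_smul' (hBpsd jk.2) (by positivity))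
      · rw [Fintype.sum_prod_type]
        simp only [hC, Finset.sum_add_distrib, Finset.sum_const, Finset.card_univ,
          ← Finset.smul_sum, hAsum, hBsum, hτ]
        rw [Matrix.kronecker_smul, Matrix.kronecker_add, ← Nat.cast_smul_eq_nsmul ℝ,
          ← Nat.cast_smul_eq_nsmul ℝ (Fintype.card S)]
        match_scalars <;> field_simp <;> ring
      · intro j
        simp only [hC, Finset.sum_add_distrib, Finset.sum_const, Finset.card_univ,
          ← Finset.smul_sum, hBsum, hNA]
        rw [← Nat.cast_smul_eq_nsmul ℝ]
        match_scalars <;> field_simp <;> ring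
      · intro k
        simp only [hC, Finset.sum_add_distrib, Finset.sum_const, Finset.card_univ,
          ← Finset.smul_sum, hAsum, hNB]
        rw [← Nat.cast_smul_eq_nsmul ℝ]
        match_scalars <;> field_simp <;> ring
  refine ⟨hcompat, ?_⟩
  apply csInf_le
  · exact ⟨0, fun x hx => hx.1.1⟩
  · exact ⟨⟨by norm_num, by norm_num⟩, hcompat⟩
end

section
/- For every pair of density operators ρ and σ on a finite-dimensional Hilbert space, the robustness of state incompatibility equals R_S(ρ,σ) = ‖ρ−σ‖₁ / (‖ρ−σ‖₁ + 2), where ‖·‖₁ is the trace norm. -/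
open Matrix Finset
open scoped Kronecker ComplexOrder

set_option linter.unusedSectionVars false
namespace StmtAux

open scoped MatrixOrder

variable {n : Type*} [Fintype n] [DecidableEq n]

lemma rsmul_eq (c : ℝ) (A : Matrix n n ℂ) : c • A = (c : ℂ) • A := by
  ext i j; simp [Matrix.smul_apply, Complex.real_smul]

noncomputable def cdiag {A : Matrix n n ℂ} (hA : A.IsHermitian) (f : n → ℝ) : Matrix n n ℂ :=
  (Matrix.IsHermitian.eigenvectorUnitary hA : Matrix n n ℂ) *
    Matrix.diagonal (fun i => (f i : ℂ)) *
    star (Matrix.IsHermitian.eigenvectorUnitary hA : Matrix n n ℂ)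

lemma cdiag_spectral {A : Matrix n n ℂ} (hA : A.IsHermitian) :
    A = cdiag hA hA.eigenvalues := by
  simpa [cdiag, Function.comp_def] using hA.spectral_theorem

lemma star_mul_self_eigen {A : Matrix n n ℂ} (hA : A.IsHermitian) :
    star (Matrix.IsHermitian.eigenvectorUnitary hA : Matrix n n ℂ) *
      (Matrix.IsHermitian.eigenvectorUnitary hA : Matrix n n ℂ) = 1 :=
  (Matrix.mem_unitaryGroup_iff').mp (Matrix.IsHermitian.eigenvectorUnitary hA).2

lemma cdiag_trace {A : Matrix n n ℂ} (hA : A.IsHermitian) (f : n → ℝ) :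
    (cdiag hA f).trace = ((∑ i, f i : ℝ) : ℂ) := by
  rw [cdiag, Matrix.trace_mul_cycle, star_mul_self_eigen hA, Matrix.one_mul,
    Matrix.trace_diagonal]
  push_cast
  ring

lemma cdiag_mul {A : Matrix n n ℂ} (hA : A.IsHermitian) (f g : n → ℝ) :
    cdiag hA f * cdiag hA g = cdiag hA (fun i => f i * g i) := by
  simp only [cdiag, Matrix.mul_assoc]
  rw [← Matrix.mul_assoc (star _), star_mul_self_eigen hA, Matrix.one_mul,
    ← Matrix.mul_assoc (Matrix.diagonal _), Matrix.diagonal_mul_diagonal]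
  push_cast
  rfl

lemma cdiag_sub {A : Matrix n n ℂ} (hA : A.IsHermitian) (f g : n → ℝ) :
    cdiag hA f - cdiag hA g = cdiag hA (fun i => f i - g i) := by
  rw [cdiag, cdiag, cdiag, ← Matrix.sub_mul, ← Matrix.mul_sub, Matrix.diagonal_sub]
  push_cast
  rfl

lemma cdiag_smul {A : Matrix n n ℂ} (hA : A.IsHermitian) (f : n → ℝ) (c : ℝ) :
    (c : ℂ) • cdiag hA f = cdiag hA (fun i => c * f i) := by
  rw [cdiag, cdiag, ← smul_mul_assoc, ← mul_smul_comm]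
  congr 2
  ext i j
  by_cases h : i = j <;> simp [Matrix.diagonal_apply, h] <;> push_cast <;> ring

lemma cdiag_one {A : Matrix n n ℂ} (hA : A.IsHermitian) :
    cdiag hA (fun _ => 1) = 1 := by
  rw [cdiag]
  simp only [Complex.ofReal_one, Matrix.diagonal_one, Matrix.mul_one]
  exact (Matrix.mem_unitaryGroup_iff).mp (Matrix.IsHermitian.eigenvectorUnitary hA).2

lemma cdiag_psd {A : Matrix n n ℂ} (hA : A.IsHermitian) (f : n → ℝ) (hf : ∀ i, 0 ≤ f i) :
    (cdiag hA f).PosSemidef := by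
  have hd : (Matrix.diagonal (fun i => (f i : ℂ))).PosSemidef := by
    refine Matrix.PosSemidef.diagonal ?_
    intro i
    exact Complex.zero_le_real.mpr (hf i)
  have := hd.mul_mul_conjTranspose_same
    (Matrix.IsHermitian.eigenvectorUnitary hA : Matrix n n ℂ)
  simpa [cdiag, Matrix.star_eq_conjTranspose] using this

lemma psd_trace_nonneg {A : Matrix n n ℂ} (hA : A.PosSemidef) : 0 ≤ A.trace := by
  rw [Matrix.trace]
  apply Finset.sum_nonneg
  intro i _
  exact hA.diag_nonneg

lemma psd_trace_mul_nonneg {A B : Matrix n n ℂ} (hA : A.PosSemidef) (hB : B.PosSemidef) :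
    0 ≤ (A * B).trace := by
  have hs : (CFC.sqrt A).PosSemidef := Matrix.LE.le.posSemidef (CFC.sqrt_nonneg A)
  have h1 : A * B = CFC.sqrt A * (CFC.sqrt A * B) := by
    rw [← Matrix.mul_assoc, CFC.sqrt_mul_sqrt_self A hA.nonneg]
  rw [h1, Matrix.trace_mul_comm]
  have := hB.mul_mul_conjTranspose_same (CFC.sqrt A)
  rw [hs.1.eq, ← Matrix.mul_assoc] at *
  exact psd_trace_nonneg this

lemma cdiag_mul_self {A : Matrix n n ℂ} (hA : A.IsHermitian) (f : n → ℝ) :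
    cdiag hA f * A = cdiag hA (fun i => f i * hA.eigenvalues i) := by
  nth_rw 2 [cdiag_spectral hA]
  rw [cdiag_mul]

lemma traceNorm_herm {A : Matrix n n ℂ} (hA : A.IsHermitian) :
    traceNorm A = ∑ i, |hA.eigenvalues i| := by
  have hM := Matrix.posSemidef_conjTranspose_mul_self A
  have habs := cdiag_psd hA (fun i => |hA.eigenvalues i|) (fun i => abs_nonneg _)
  have hsq : cdiag hA (fun i => |hA.eigenvalues i|) ^ 2 = Aᴴ * A := by
    rw [pow_two, cdiag_mul, hA.eq]
    conv_rhs => rw [cdiag_spectral hA]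
    rw [cdiag_mul]
    exact congrArg _ (funext fun i => abs_mul_abs_self (hA.eigenvalues i))
  have hse : cdiag hA (fun i => |hA.eigenvalues i|) = CFC.sqrt (Aᴴ * A) :=
    ((CFC.sqrt_eq_iff _ _ hM.nonneg habs.nonneg).mpr (by rw [← pow_two]; exact hsq)).symm
  have h1 : (CFC.sqrt (Aᴴ * A)).trace = ((∑ i, Real.sqrt (hM.1.eigenvalues i) : ℝ) : ℂ) := by
    have h : CFC.sqrt (Aᴴ * A) = cdiag hM.1 (fun i => Real.sqrt (hM.1.eigenvalues i)) := by
      refine (CFC.sqrt_eq_iff _ _ hM.nonneg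
        (cdiag_psd hM.1 _ (fun i => Real.sqrt_nonneg _)).nonneg).mpr ?_
      rw [cdiag_mul]
      conv_rhs => rw [cdiag_spectral hM.1]
      exact congrArg _ (funext fun i => Real.mul_self_sqrt (hM.eigenvalues_nonneg i))
    rw [h, cdiag_trace]
  have h2 : (CFC.sqrt (Aᴴ * A)).trace = ((∑ i, |hA.eigenvalues i| : ℝ) : ℂ) := by
    rw [← hse, cdiag_trace]
  unfold traceNorm
  exact_mod_cast h1.symm.trans h2

end StmtAux

open StmtAux

/-- the robustness of state incompatibility equals
`‖ρ−σ‖₁ / (‖ρ−σ‖₁ + 2)`. -/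
theorem stmt9 {n : Type*} [Fintype n] [DecidableEq n]
    (ρ σ : Matrix n n ℂ) (hρ : IsDensity ρ) (hσ : IsDensity σ) :
    StateRobustness ρ σ = traceNorm (ρ - σ) / (traceNorm (ρ - σ) + 2) := by
  classical
  obtain ⟨hρp, hρt⟩ := hρ
  obtain ⟨hσp, hσt⟩ := hσ
  set D := ρ - σ with hDdef
  have hD : D.IsHermitian := hρp.1.sub hσp.1
  set d := hD.eigenvalues with hd
  have htrD : D.trace = 0 := by rw [hDdef, Matrix.trace_sub, hρt, hσt, sub_self]
  have hsumd : ∑ i, d i = 0 := by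
    have h1 : D.trace = ((∑ i, d i : ℝ) : ℂ) := by
      nth_rw 1 [cdiag_spectral hD]
      exact cdiag_trace hD d
    rw [htrD] at h1
    exact_mod_cast h1.symm
  set t := ∑ i, |d i| with ht
  have htnn : (0:ℝ) ≤ t := Finset.sum_nonneg fun i _ => abs_nonneg _
  have htN : traceNorm D = t := traceNorm_herm hD
  have hpos2 : (0:ℝ) < t + 2 := by linarith
  have hpq : (∑ i, max (d i) 0) = t / 2 ∧ (∑ i, max (-(d i)) 0) = t / 2 := by
    have e1 : (∑ i, max (d i) 0) - (∑ i, max (-(d i)) 0) = 0 := by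
      calc (∑ i, max (d i) 0) - (∑ i, max (-(d i)) 0)
          = ∑ i, (max (d i) 0 - max (-(d i)) 0) := (Finset.sum_sub_distrib _ _).symm
        _ = ∑ i, d i := Finset.sum_congr rfl fun i _ => max_zero_sub_max_neg_zero_eq_self (d i)
        _ = 0 := hsumd
    have e2 : (∑ i, max (d i) 0) + (∑ i, max (-(d i)) 0) = t := by
      rw [← Finset.sum_add_distrib, ht]
      refine Finset.sum_congr rfl fun i _ => ?_
      rcases le_total (d i) 0 with h | h
      · rw [max_eq_right h, max_eq_left (neg_nonneg.mpr h), abs_of_nonpos h, zero_add]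
      · rw [max_eq_left h, max_eq_right (neg_nonpos.mpr h), abs_of_nonneg h, add_zero]
    constructor <;> linarith
  set r := t / (t + 2) with hr
  have hr0 : 0 ≤ r := div_nonneg htnn hpos2.le
  have hr1 : r ≤ 1 := by rw [hr, div_le_one hpos2]; linarith
  -- membership of r in the feasible set
  have hrS : r ∈ {lam : ℝ | lam ∈ Set.Icc (0 : ℝ) 1 ∧ ∃ ρ' σ' : Matrix n n ℂ,
      IsDensity ρ' ∧ IsDensity σ' ∧
      (1 - lam) • ρ + lam • ρ' = (1 - lam) • σ + lam • σ'} := by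
    refine ⟨⟨hr0, hr1⟩, ?_⟩
    rcases eq_or_lt_of_le htnn with h0 | hpos
    · -- t = 0 : ρ = σ
      have hdz : ∀ i, d i = 0 := by
        intro i
        have := (Finset.sum_eq_zero_iff_of_nonneg
          (fun i _ => abs_nonneg (d i))).mp h0.symm i (Finset.mem_univ i)
        exact abs_eq_zero.mp this
      have hD0 : D = 0 := by
        nth_rw 1 [cdiag_spectral hD]
        have : (fun i => ((d i : ℝ) : ℂ)) = fun _ => (0:ℂ) := funext fun i => by
          rw [hdz i]; simp
        rw [cdiag]
        rw [this]
        simp [Matrix.diagonal_zero]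
      have hρσ : ρ = σ := sub_eq_zero.mp hD0
      refine ⟨ρ, ρ, ⟨hρp, hρt⟩, ⟨hρp, hρt⟩, by rw [hρσ]⟩
    · -- t > 0
      set c : ℝ := 2 / t with hc
      have hct : 0 ≤ c := by positivity
      refine ⟨cdiag hD (fun i => c * max (-(d i)) 0),
        cdiag hD (fun i => c * max (d i) 0), ?_, ?_, ?_⟩
      have htne : t ≠ 0 := ne_of_gt hpos
      · refine ⟨cdiag_psd hD _ (fun i => mul_nonneg hct (le_max_right _ _)), ?_⟩
        rw [cdiag_trace, ← Finset.mul_sum, hpq.2]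
        norm_cast
        rw [hc]
        field_simp
      · refine ⟨cdiag_psd hD _ (fun i => mul_nonneg hct (le_max_right _ _)), ?_⟩
        rw [cdiag_trace, ← Finset.mul_sum, hpq.1]
        norm_cast
        rw [hc]
        field_simp
      · -- the mixing identity
        have hkey : cdiag hD (fun i => c * max (d i) 0) -
            cdiag hD (fun i => c * max (-(d i)) 0) = ((c : ℂ)) • D := by
          rw [cdiag_sub]
          have : (fun i => c * max (d i) 0 - c * max (-(d i)) 0) = fun i => c * d i := by
            funext i
            rw [← mul_sub, max_zero_sub_max_neg_zero_eq_self]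
          rw [this, ← cdiag_smul, ← cdiag_spectral hD]
        have hrc : r * c = 1 - r := by
          rw [hr, hc]
          field_simp
          ring
        have key2 : (1 - r) • ρ - (1 - r) • σ =
            r • cdiag hD (fun i => c * max (d i) 0) -
              r • cdiag hD (fun i => c * max (-(d i)) 0) := by
          rw [← smul_sub, ← smul_sub, hkey, ← hDdef]
          rw [rsmul_eq, rsmul_eq, smul_smul]
          norm_cast
          rw [hrc]
        rw [add_comm ((1 - r) • σ)]
        exact sub_eq_sub_iff_add_eq_add.mp key2
  have hlow : ∀ lam ∈ {lam : ℝ | lam ∈ Set.Icc (0 : ℝ) 1 ∧ ∃ ρ' σ' : Matrix n n ℂ,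
      IsDensity ρ' ∧ IsDensity σ' ∧
      (1 - lam) • ρ + lam • ρ' = (1 - lam) • σ + lam • σ'}, r ≤ lam := by
    rintro lam ⟨⟨hl0, hl1⟩, ρ', σ', ⟨hρ'p, hρ't⟩, ⟨hσ'p, hσ't⟩, heq⟩
    have hkey : ((1 - lam : ℝ) : ℂ) • D = ((lam : ℝ) : ℂ) • (σ' - ρ') := by
      rw [hDdef, ← rsmul_eq, ← rsmul_eq, smul_sub, smul_sub]
      rw [add_comm ((1 - lam) • σ)] at heq
      exact sub_eq_sub_iff_add_eq_add.mpr heq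
    set χ : n → ℝ := fun i => if 0 < d i then 1 else 0 with hχ
    have hPi : (cdiag hD χ).PosSemidef :=
      cdiag_psd hD _ (fun i => by rw [hχ]; dsimp; split <;> norm_num)
    have hPi1 : (1 : Matrix n n ℂ) - cdiag hD χ = cdiag hD (fun i => 1 - χ i) := by
      nth_rw 1 [← cdiag_one hD]
      rw [cdiag_sub]
    have hPi1p : ((1 : Matrix n n ℂ) - cdiag hD χ).PosSemidef := by
      rw [hPi1]
      exact cdiag_psd hD _ (fun i => by rw [hχ]; dsimp; split <;> norm_num)
    -- trace of Π * D
    have htrPD : (cdiag hD χ * D).trace = ((t / 2 : ℝ) : ℂ) := by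
      rw [cdiag_mul_self, cdiag_trace]
      congr 1
      rw [← hpq.1]
      refine Finset.sum_congr rfl fun i _ => ?_
      rw [hχ]
      dsimp
      split
      · rw [one_mul]
        exact (max_eq_left (by linarith [‹0 < d i›])).symm
      · rw [zero_mul]
        exact (max_eq_right (by linarith [not_lt.mp ‹¬ 0 < d i›])).symm
    -- the two trace bounds
    have ha : (0:ℂ) ≤ (cdiag hD χ * ρ').trace := psd_trace_mul_nonneg hPi hρ'p
    have hb : (cdiag hD χ * σ').trace ≤ 1 := by
      have h0 : (0:ℂ) ≤ (((1 : Matrix n n ℂ) - cdiag hD χ) * σ').trace :=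
        psd_trace_mul_nonneg hPi1p hσ'p
      rw [Matrix.sub_mul, Matrix.one_mul, Matrix.trace_sub, hσ't] at h0
      exact sub_nonneg.mp h0
    -- multiply hkey by Π and take traces
    have hmain : (((1 - lam) * (t / 2) : ℝ) : ℂ) =
        ((lam : ℝ) : ℂ) * ((cdiag hD χ * σ').trace - (cdiag hD χ * ρ').trace) := by
      have h3 := congrArg (fun M => (cdiag hD χ * M).trace) hkey
      simp only [Matrix.mul_smul, Matrix.trace_smul, smul_eq_mul] at h3
      rw [htrPD, Matrix.mul_sub (cdiag hD χ) σ' ρ', Matrix.trace_sub] at h3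
      push_cast
      push_cast at h3
      linear_combination h3
    have hfin : (((1 - lam) * (t / 2) : ℝ) : ℂ) ≤ ((lam : ℝ) : ℂ) := by
      rw [hmain]
      calc ((lam : ℝ) : ℂ) * ((cdiag hD χ * σ').trace - (cdiag hD χ * ρ').trace)
          ≤ ((lam : ℝ) : ℂ) * (cdiag hD χ * σ').trace := by
            refine mul_le_mul_of_nonneg_left ?_ (Complex.zero_le_real.mpr hl0)
            exact sub_le_self _ ha
        _ ≤ ((lam : ℝ) : ℂ) * 1 := mul_le_mul_of_nonneg_left hb (Complex.zero_le_real.mpr hl0)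
        _ = ((lam : ℝ) : ℂ) := mul_one _
    have hfinR : (1 - lam) * (t / 2) ≤ lam := Complex.real_le_real.mp hfin
    rw [hr, div_le_iff₀ hpos2]
    nlinarith
  have hbdd : BddBelow {lam : ℝ | lam ∈ Set.Icc (0 : ℝ) 1 ∧ ∃ ρ' σ' : Matrix n n ℂ,
      IsDensity ρ' ∧ IsDensity σ' ∧
      (1 - lam) • ρ + lam • ρ' = (1 - lam) • σ + lam • σ'} :=
    ⟨0, fun x hx => hx.1.1⟩
  have : StateRobustness ρ σ = r := by
    rw [StateRobustness]
    exact le_antisymm (csInf_le hbdd hrS) (le_csInf ⟨r, hrS⟩ hlow)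
  rw [this, htN, hr]
end

section
/- For qubit density operators ρ = (1/2)(I + r·σ⃗) and σ = (1/2)(I + s·σ⃗) with Bloch vectors r, s ∈ ℝ³, the robustness of state incompatibility equals R_S(ρ,σ) = ‖r−s‖ / (‖r−s‖ + 2), where ‖r−s‖ is the Euclidean norm. -/
open Matrix Finset
open scoped Kronecker ComplexOrder

/-- The Pauli matrices. -/
def pauliX : Matrix (Fin 2) (Fin 2) ℂ := !![0, 1; 1, 0]
def pauliY : Matrix (Fin 2) (Fin 2) ℂ := !![0, -Complex.I; Complex.I, 0]
def pauliZ : Matrix (Fin 2) (Fin 2) ℂ := !![1, 0; 0, -1]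

noncomputable def pvec (u : Fin 3 → ℝ) : Matrix (Fin 2) (Fin 2) ℂ :=
  u 0 • pauliX + u 1 • pauliY + u 2 • pauliZ

noncomputable def bloch (u : Fin 3 → ℝ) : Matrix (Fin 2) (Fin 2) ℂ :=
  (1/2 : ℝ) • (1 + pvec u)

lemma trace_bloch (u : Fin 3 → ℝ) : (bloch u).trace = 1 := by
  simp [bloch, pvec, pauliX, pauliY, pauliZ, Matrix.trace_fin_two, Matrix.one_apply]

lemma trace_pvec_mul_bloch (u w : Fin 3 → ℝ) :
    (pvec u * bloch w).trace = ((∑ i, u i * w i : ℝ) : ℂ) := by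
  simp [bloch, pvec, pauliX, pauliY, pauliZ, Matrix.trace_fin_two, Matrix.mul_apply,
    Fin.sum_univ_two, Fin.sum_univ_three, Matrix.one_fin_two, Matrix.vecMul, dotProduct,
    Matrix.add_apply, Matrix.smul_apply]
  push_cast
  ring_nf
  rw [Complex.I_sq]
  ring

lemma pvec_herm (u : Fin 3 → ℝ) : (pvec u).IsHermitian := by
  ext i j
  fin_cases i <;> fin_cases j <;>
    simp [pvec, pauliX, pauliY, pauliZ, Matrix.conjTranspose_apply, Matrix.add_apply,
      Matrix.smul_apply, Complex.ext_iff]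

lemma bloch_herm (u : Fin 3 → ℝ) : (bloch u).IsHermitian := by
  unfold bloch Matrix.IsHermitian
  rw [Matrix.conjTranspose_smul, star_trivial, (isHermitian_one.add (pvec_herm u)).eq]

lemma bloch_psd {u : Fin 3 → ℝ} (hu : ∑ i, u i ^ 2 ≤ 1) : (bloch u).PosSemidef := by
  refine Matrix.PosSemidef.of_dotProduct_mulVec_nonneg (bloch_herm u) fun x => ?_
  have hx : star x ⬝ᵥ bloch u *ᵥ x =
      (((1:ℝ)/2) * ((Complex.normSq (x 0) + Complex.normSq (x 1))
        + (u 0 * (2 * ((starRingEnd ℂ) (x 0) * x 1).re)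
          + u 1 * (2 * ((starRingEnd ℂ) (x 0) * x 1).im)
          + u 2 * (Complex.normSq (x 0) - Complex.normSq (x 1)))) : ℝ) := by
    simp [bloch, pvec, pauliX, pauliY, pauliZ, Matrix.mulVec, dotProduct,
      Fin.sum_univ_two, Matrix.one_fin_two, Matrix.add_apply, Matrix.smul_apply,
      Complex.normSq_apply, Complex.ext_iff]
    constructor <;> ring_nf
  rw [hx, Complex.zero_le_real]
  set a := Complex.normSq (x 0) with hadef
  set b := Complex.normSq (x 1) with hbdef
  set p := ((starRingEnd ℂ) (x 0) * x 1).re with hpdef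
  set q := ((starRingEnd ℂ) (x 0) * x 1).im with hqdef
  have ha : 0 ≤ a := Complex.normSq_nonneg _
  have hb : 0 ≤ b := Complex.normSq_nonneg _
  have hpq : p ^ 2 + q ^ 2 = a * b := by
    have h := Complex.normSq_mul ((starRingEnd ℂ) (x 0)) (x 1)
    rw [Complex.normSq_conj] at h
    rw [hpdef, hqdef, hadef, hbdef, ← h, Complex.normSq_apply]
    ring
  have hcs := Finset.sum_mul_sq_le_sq_mul_sq Finset.univ u ![2*p, 2*q, a-b]
  rw [Fin.sum_univ_three, Fin.sum_univ_three, Fin.sum_univ_three] at hcs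
  simp only [Matrix.cons_val_zero, Matrix.cons_val_one, Matrix.head_cons,
    Matrix.cons_val_two, Matrix.tail_cons] at hcs
  rw [Fin.sum_univ_three] at hu
  nlinarith [hcs, hpq, hu, ha, hb, sq_nonneg (a + b), sq_nonneg (a - b),
    sq_nonneg (u 0 * (2*p) + u 1 * (2*q) + u 2 * (a - b) + (a + b)), mul_nonneg ha hb]

lemma psd_trace_nonneg {k : Type*} [Fintype k] [DecidableEq k] {M : Matrix k k ℂ}
    (h : M.PosSemidef) : 0 ≤ M.trace := by
  rw [Matrix.trace]
  apply Finset.sum_nonneg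
  intro i _
  have := h.dotProduct_mulVec_nonneg (Pi.single i 1)
  simpa [dotProduct, Matrix.mulVec, Pi.single_apply, Matrix.diag] using this

lemma trace_mul_psd_nonneg {k : Type*} [Fintype k] [DecidableEq k]
    {A B : Matrix k k ℂ} (hA : A.PosSemidef) (hB : B.PosSemidef) :
    0 ≤ (A * B).trace := by
  obtain ⟨C, rfl⟩ := (by open scoped MatrixOrder in exact CStarAlgebra.nonneg_iff_eq_star_mul_self.mp hA.nonneg : ∃ C : Matrix k k ℂ, A = Cᴴ * C)
  rw [Matrix.mul_assoc, Matrix.trace_mul_comm]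
  exact psd_trace_nonneg (hB.mul_mul_conjTranspose_same C)

lemma bloch_add_bloch_neg (u : Fin 3 → ℝ) : bloch u + bloch (fun i => -u i) = 1 := by
  have h : pvec (fun i => -u i) = -pvec u := by
    simp [pvec, neg_smul]; abel
  unfold bloch
  rw [h]
  module

lemma two_smul_bloch (u : Fin 3 → ℝ) : (2:ℝ) • bloch u = 1 + pvec u := by
  unfold bloch; module

lemma bloch_comb {α β : ℝ} (h : α + β = 1) (x y : Fin 3 → ℝ) :
    α • bloch x + β • bloch y = bloch (fun i => α * x i + β * y i) := by
  have hp : pvec (fun i => α * x i + β * y i) = α • pvec x + β • pvec y := by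
    simp only [pvec, Pi.add_apply, Pi.smul_apply, add_smul, mul_smul, smul_add]
    abel
  have hβ : β = 1 - α := by linarith
  subst hβ
  unfold bloch
  rw [hp]
  module

lemma trace_pvec_mul_density_re {u : Fin 3 → ℝ} (hu : ∑ i, u i ^ 2 ≤ 1)
    {τ : Matrix (Fin 2) (Fin 2) ℂ} (hτ : τ.PosSemidef) (ht : τ.trace = 1) :
    |(pvec u * τ).trace.re| ≤ 1 := by
  have hun : ∑ i, (-u i) ^ 2 ≤ 1 := by simpa using hu
  have hP : 0 ≤ (bloch u * τ).trace := trace_mul_psd_nonneg (bloch_psd hu) hτ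
  have hN : 0 ≤ (bloch (fun i => -u i) * τ).trace :=
    trace_mul_psd_nonneg (bloch_psd hun) hτ
  have hsum : (bloch u * τ).trace + (bloch (fun i => -u i) * τ).trace = 1 := by
    rw [← Matrix.trace_add, ← Matrix.add_mul, bloch_add_bloch_neg, Matrix.one_mul, ht]
  have hF : (pvec u * τ).trace = 2 * (bloch u * τ).trace - 1 := by
    have h2 : pvec u * τ = (2:ℝ) • (bloch u * τ) - τ := by
      rw [← Matrix.smul_mul, two_smul_bloch, Matrix.add_mul, Matrix.one_mul]
      abel
    rw [h2, Matrix.trace_sub, Matrix.trace_smul, ht]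
    push_cast [Complex.real_smul]
    ring
  have hPre : 0 ≤ (bloch u * τ).trace.re := (Complex.le_def.mp hP).1
  have hNre : 0 ≤ (bloch (fun i => -u i) * τ).trace.re := (Complex.le_def.mp hN).1
  have hsr : (bloch u * τ).trace.re + (bloch (fun i => -u i) * τ).trace.re = 1 := by
    have := congrArg Complex.re hsum
    simpa using this
  rw [hF]
  simp only [Complex.sub_re, Complex.mul_re]
  rw [abs_le]
  constructor <;> simp <;> nlinarith

lemma bloch_density {u : Fin 3 → ℝ} (hu : ∑ i, u i ^ 2 ≤ 1) : IsDensity (bloch u) :=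
  ⟨bloch_psd hu, trace_bloch u⟩

lemma lower_bound {u r s : Fin 3 → ℝ} (hu : ∑ i, u i ^ 2 ≤ 1) {lam : ℝ} (hl : 0 ≤ lam)
    {ρ' σ' : Matrix (Fin 2) (Fin 2) ℂ} (hρ' : IsDensity ρ') (hσ' : IsDensity σ')
    (heq : (1 - lam) • bloch r + lam • ρ' = (1 - lam) • bloch s + lam • σ') :
    (1 - lam) * (∑ i, u i * (r i - s i)) ≤ 2 * lam := by
  have h := congrArg (fun M => (pvec u * M).trace) heq
  simp only [Matrix.mul_add, Matrix.mul_smul, Matrix.trace_add, Matrix.trace_smul,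
    trace_pvec_mul_bloch] at h
  have h2 := congrArg Complex.re h
  simp only [Complex.add_re, Complex.real_smul, Complex.mul_re, Complex.ofReal_re,
    Complex.ofReal_im, Complex.sub_re, Complex.one_re, zero_mul,
    sub_zero, mul_zero] at h2
  have hbρ := abs_le.mp (trace_pvec_mul_density_re hu hρ'.1 hρ'.2)
  have hbσ := abs_le.mp (trace_pvec_mul_density_re hu hσ'.1 hσ'.2)
  have hsplit : ∑ i, u i * (r i - s i) = (∑ i, u i * r i) - ∑ i, u i * s i := by
    rw [← Finset.sum_sub_distrib]
    exact Finset.sum_congr rfl fun i _ => by ring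
  rw [hsplit]
  nlinarith [h2, hbρ.1, hbρ.2, hbσ.1, hbσ.2, hl]

/-- for qubit states with Bloch vectors `r`, `s`, the robustness of
state incompatibility equals `‖r−s‖/(‖r−s‖+2)` (Euclidean norm). -/
theorem stmt10 (r s : Fin 3 → ℝ)
    (ρ σ : Matrix (Fin 2) (Fin 2) ℂ)
    (hρdef : ρ = (1/2 : ℝ) • (1 + r 0 • pauliX + r 1 • pauliY + r 2 • pauliZ))
    (hσdef : σ = (1/2 : ℝ) • (1 + s 0 • pauliX + s 1 • pauliY + s 2 • pauliZ))
    (hρ : IsDensity ρ) (hσ : IsDensity σ) :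
    StateRobustness ρ σ =
      Real.sqrt (∑ i, (r i - s i) ^ 2) / (Real.sqrt (∑ i, (r i - s i) ^ 2) + 2) := by
  have hρb : ρ = bloch r := by rw [hρdef]; unfold bloch pvec; congr 1; abel
  have hσb : σ = bloch s := by rw [hσdef]; unfold bloch pvec; congr 1; abel
  set d := Real.sqrt (∑ i, (r i - s i) ^ 2) with hd
  have hsumnn : 0 ≤ ∑ i, (r i - s i) ^ 2 := Finset.sum_nonneg fun i _ => sq_nonneg _
  have hd2 : d ^ 2 = ∑ i, (r i - s i) ^ 2 := Real.sq_sqrt hsumnn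
  have hd0 : 0 ≤ d := Real.sqrt_nonneg _
  unfold StateRobustness
  by_cases hdz : d = 0
  · have h0 : ∑ i, (r i - s i) ^ 2 = 0 := by rw [← hd2, hdz]; ring
    have hrs : ∀ i, r i = s i := by
      intro i
      have := (Finset.sum_eq_zero_iff_of_nonneg (fun i _ => sq_nonneg _)).mp h0 i
        (Finset.mem_univ i)
      nlinarith [this]
    have hρσ : ρ = σ := by rw [hρb, hσb, funext hrs]
    have mem0 : (0:ℝ) ∈ {lam : ℝ | lam ∈ Set.Icc (0 : ℝ) 1 ∧
        ∃ ρ' σ' : Matrix (Fin 2) (Fin 2) ℂ, IsDensity ρ' ∧ IsDensity σ' ∧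
        (1 - lam) • ρ + lam • ρ' = (1 - lam) • σ + lam • σ'} :=
      ⟨⟨le_refl 0, zero_le_one⟩, ρ, ρ, hρ, hρ, by rw [hρσ]⟩
    have h02 : (0:ℝ) / (0 + 2) = 0 := by norm_num
    rw [hdz, h02]
    exact le_antisymm (csInf_le ⟨0, fun x hx => hx.1.1⟩ mem0)
      (le_csInf ⟨0, mem0⟩ fun x hx => hx.1.1)
  · have hdpos : 0 < d := lt_of_le_of_ne hd0 (Ne.symm hdz)
    set u := fun i => (r i - s i) / d with hu
    have hu2 : ∑ i, u i ^ 2 = 1 := by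
      simp only [hu, div_pow]
      rw [← Finset.sum_div, ← hd2]
      field_simp
    have hurs : ∑ i, u i * (r i - s i) = d := by
      have : ∀ i, u i * (r i - s i) = (r i - s i) ^ 2 / d := fun i => by
        simp only [hu]; ring
      rw [Finset.sum_congr rfl fun i _ => this i, ← Finset.sum_div, ← hd2]
      field_simp
    have hl0 : 0 ≤ d / (d + 2) := by positivity
    have hl1 : d / (d + 2) ≤ 1 := by
      rw [div_le_one (by linarith)]; linarith
    have memb : d / (d + 2) ∈ {lam : ℝ | lam ∈ Set.Icc (0 : ℝ) 1 ∧
        ∃ ρ' σ' : Matrix (Fin 2) (Fin 2) ℂ, IsDensity ρ' ∧ IsDensity σ' ∧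
        (1 - lam) • ρ + lam • ρ' = (1 - lam) • σ + lam • σ'} := by
      refine ⟨⟨hl0, hl1⟩, bloch (fun i => -u i), bloch u,
        bloch_density (by simpa using le_of_eq hu2), bloch_density (le_of_eq hu2), ?_⟩
      have hveq : (fun i => (1 - d / (d + 2)) * r i + d / (d + 2) * (-u i))
          = (fun i => (1 - d / (d + 2)) * s i + d / (d + 2) * u i) := by
        funext i
        simp only [hu]
        field_simp
        ring
      rw [hρb, hσb, bloch_comb (by ring) r _, bloch_comb (by ring) s _, hveq]
    have lb : ∀ lam ∈ {lam : ℝ | lam ∈ Set.Icc (0 : ℝ) 1 ∧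
        ∃ ρ' σ' : Matrix (Fin 2) (Fin 2) ℂ, IsDensity ρ' ∧ IsDensity σ' ∧
        (1 - lam) • ρ + lam • ρ' = (1 - lam) • σ + lam • σ'}, d / (d + 2) ≤ lam := by
      rintro lam ⟨⟨hla, hlb⟩, ρ', σ', hρ', hσ', heq⟩
      rw [hρb, hσb] at heq
      have hkey := lower_bound (le_of_eq hu2) hla hρ' hσ' heq
      rw [hurs] at hkey
      rw [div_le_iff₀ (by linarith)]
      nlinarith
    exact le_antisymm (csInf_le ⟨0, fun x hx => hx.1.1⟩ memb)
      (le_csInf ⟨_, memb⟩ lb)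
end

section
/- For the robustness of state incompatibility, the optimal added states can be chosen orthogonal: given density operators ρ ≠ σ, set Δ = (σ−ρ)/‖σ−ρ‖₁ with Jordan decomposition Δ = Δ₊ − Δ₋; then ρ̃ := 2Δ₊ and σ̃ := 2Δ₋ are density operators satisfying ρ̃σ̃ = 0, ‖ρ̃−σ̃‖₁ = 2, and (1−λ*)ρ + λ*ρ̃ = (1−λ*)σ + λ*σ̃ for λ* = ‖ρ−σ‖₁/(‖ρ−σ‖₁+2). -/
open Matrix Finset
open scoped Kronecker ComplexOrder

noncomputable section

variable {n m : Type*} [Fintype n] [DecidableEq n] [Fintype m] [DecidableEq m]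

set_option linter.unusedSectionVars false

/-- The square root of a positive semidefinite matrix (as in the older Mathlib). -/
noncomputable def Matrix.PosSemidef.sqrt {A : Matrix n n ℂ} (hA : A.PosSemidef) : Matrix n n ℂ :=
  (hA.1.eigenvectorUnitary : Matrix n n ℂ) *
    Matrix.diagonal ((↑) ∘ Real.sqrt ∘ hA.1.eigenvalues) *
    star (hA.1.eigenvectorUnitary : Matrix n n ℂ)

open scoped MatrixOrder in
lemma Matrix.PosSemidef.sqrt_eq_cfcSqrt {A : Matrix n n ℂ} (hA : A.PosSemidef) :
    hA.sqrt = CFC.sqrt A := by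
  rw [CFC.sqrt_eq_real_sqrt A hA.nonneg, cfcₙ_eq_cfc, hA.1.cfc_eq, Matrix.IsHermitian.cfc,
    Unitary.conjStarAlgAut_apply]
  rfl

open scoped MatrixOrder in
lemma Matrix.PosSemidef.posSemidef_sqrt {A : Matrix n n ℂ} (hA : A.PosSemidef) :
    hA.sqrt.PosSemidef := by
  rw [hA.sqrt_eq_cfcSqrt]
  exact (CFC.sqrt_nonneg A).posSemidef

open scoped MatrixOrder in
lemma Matrix.PosSemidef.sqrt_mul_self {A : Matrix n n ℂ} (hA : A.PosSemidef) :
    hA.sqrt * hA.sqrt = A := by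
  rw [hA.sqrt_eq_cfcSqrt]
  exact CFC.sqrt_mul_sqrt_self A hA.nonneg

open scoped MatrixOrder in
lemma Matrix.PosSemidef.eq_sqrt_of_sq_eq {A : Matrix n n ℂ} (hA : A.PosSemidef)
    {B : Matrix n n ℂ} (hB : B.PosSemidef) (hAB : A ^ 2 = B) : A = hB.sqrt := by
  rw [hB.sqrt_eq_cfcSqrt]
  exact ((CFC.sqrt_eq_iff B A hB.nonneg hA.nonneg).mpr (by rw [← sq]; exact hAB)).symm

lemma trace_sqrt (X : Matrix n n ℂ) :
    (Matrix.posSemidef_conjTranspose_mul_self X).sqrt.trace = (traceNorm X : ℂ) := by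
  have hX := Matrix.posSemidef_conjTranspose_mul_self X
  have hu : (star (hX.1.eigenvectorUnitary : Matrix n n ℂ)) *
      (hX.1.eigenvectorUnitary : Matrix n n ℂ) = 1 :=
    (Matrix.mem_unitaryGroup_iff').mp hX.1.eigenvectorUnitary.2
  rw [Matrix.PosSemidef.sqrt, Matrix.trace_mul_cycle]
  simp only [hu, one_mul]
  rw [Matrix.trace_diagonal, traceNorm]
  push_cast
  rfl

lemma sqrt_congr {M N : Matrix n n ℂ} (hM : M.PosSemidef) (hN : N.PosSemidef)
    (h : M = N) : hM.sqrt = hN.sqrt := by subst h; rfl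

lemma traceNorm_congr {X Y : Matrix n n ℂ} (h : Xᴴ * X = Yᴴ * Y) :
    traceNorm X = traceNorm Y := by
  have := trace_sqrt X
  rw [sqrt_congr _ (Matrix.posSemidef_conjTranspose_mul_self Y) h, trace_sqrt Y] at this
  exact_mod_cast this.symm

lemma trace_eq_traceNorm {A : Matrix n n ℂ} (hA : A.PosSemidef) :
    A.trace = (traceNorm A : ℂ) := by
  have h2 : A ^ 2 = Aᴴ * A := by rw [pow_two, hA.1]
  conv_lhs => rw [show A = (Matrix.posSemidef_conjTranspose_mul_self A).sqrt from
    hA.eq_sqrt_of_sq_eq _ h2]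
  exact trace_sqrt A

lemma posSemidef_rsmul {A : Matrix n n ℂ} (hA : A.PosSemidef) {c : ℝ} (hc : 0 ≤ c) :
    (c • A).PosSemidef := by
  exact hA.smul hc

lemma traceNorm_rsmul (X : Matrix n n ℂ) {c : ℝ} (hc : 0 ≤ c) :
    traceNorm (c • X) = c * traceNorm X := by
  have hX := Matrix.posSemidef_conjTranspose_mul_self X
  have hsq : ((c • (Matrix.posSemidef_conjTranspose_mul_self X).sqrt)) ^ 2
      = (c • X)ᴴ * (c • X) := by
    rw [Matrix.conjTranspose_smul, star_trivial, pow_two, smul_mul_smul_comm,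
      hX.sqrt_mul_self, smul_mul_smul_comm]
  have hs := (posSemidef_rsmul hX.posSemidef_sqrt hc).eq_sqrt_of_sq_eq
    (Matrix.posSemidef_conjTranspose_mul_self (c • X)) hsq
  have h1 := trace_sqrt (c • X)
  rw [← hs, Matrix.trace_smul, trace_sqrt X] at h1
  have h2 : ((c * traceNorm X : ℝ) : ℂ) = ((traceNorm (c • X) : ℝ) : ℂ) := by
    push_cast
    rw [← h1]
    simp [Complex.real_smul]
  exact_mod_cast h2.symm

lemma traceNorm_nonneg (X : Matrix n n ℂ) : 0 ≤ traceNorm X :=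
  Finset.sum_nonneg fun i _ => Real.sqrt_nonneg _

lemma eq_zero_of_traceNorm_eq_zero {X : Matrix n n ℂ} (h : traceNorm X = 0) : X = 0 := by
  have hX := Matrix.posSemidef_conjTranspose_mul_self X
  have hall : ∀ i, hX.1.eigenvalues i = 0 := by
    intro i
    have hsq : ∀ j ∈ Finset.univ, (0:ℝ) ≤ Real.sqrt (hX.1.eigenvalues j) :=
      fun j _ => Real.sqrt_nonneg _
    have h0 := (Finset.sum_eq_zero_iff_of_nonneg hsq).mp h i (Finset.mem_univ i)
    have hle := Real.sqrt_eq_zero'.mp h0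
    have hnn := hX.eigenvalues_nonneg i
    linarith
  have hzero : Xᴴ * X = 0 := by
    have hst := hX.1.spectral_theorem
    have hd : Matrix.diagonal (RCLike.ofReal ∘ hX.1.eigenvalues) = (0 : Matrix n n ℂ) := by
      ext i j
      simp [Matrix.diagonal_apply, hall]
    rw [hd, map_zero] at hst
    exact hst
  exact Matrix.conjTranspose_mul_self_eq_zero.mp hzero


end

/-- the optimal added states in the robustness of state
incompatibility can be chosen orthogonal, via the Jordan decomposition of
`Δ = (σ−ρ)/‖σ−ρ‖₁`. -/
theorem stmt13 {n : Type*} [Fintype n] [DecidableEq n]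
    (ρ σ : Matrix n n ℂ) (hρ : IsDensity ρ) (hσ : IsDensity σ) (hne : ρ ≠ σ)
    (Δp Δm : Matrix n n ℂ) (hp : Δp.PosSemidef) (hm : Δm.PosSemidef)
    (horth : Δp * Δm = 0)
    (hJordan : (traceNorm (σ - ρ))⁻¹ • (σ - ρ) = Δp - Δm) :
    IsDensity ((2:ℝ) • Δp) ∧ IsDensity ((2:ℝ) • Δm) ∧
    ((2:ℝ) • Δp) * ((2:ℝ) • Δm) = 0 ∧
    traceNorm ((2:ℝ) • Δp - (2:ℝ) • Δm) = 2 ∧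
    (1 - traceNorm (ρ - σ) / (traceNorm (ρ - σ) + 2)) • ρ +
        (traceNorm (ρ - σ) / (traceNorm (ρ - σ) + 2)) • ((2:ℝ) • Δp) =
      (1 - traceNorm (ρ - σ) / (traceNorm (ρ - σ) + 2)) • σ +
        (traceNorm (ρ - σ) / (traceNorm (ρ - σ) + 2)) • ((2:ℝ) • Δm) := by

  set t := traceNorm (σ - ρ) with ht
  have ht0 : t ≠ 0 := by
    intro h
    have h2 := eq_zero_of_traceNorm_eq_zero h
    rw [sub_eq_zero] at h2
    exact hne h2.symm
  have htpos : 0 < t := lt_of_le_of_ne (traceNorm_nonneg _) (Ne.symm ht0)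
  -- orthogonality in both orders
  have horth' : Δm * Δp = 0 := by
    have := congrArg Matrix.conjTranspose horth
    rwa [Matrix.conjTranspose_mul, hp.1, hm.1, Matrix.conjTranspose_zero] at this
  -- (Δp - Δm)ᴴ (Δp - Δm) = (Δp + Δm)ᴴ (Δp + Δm)
  have hsq : (Δp - Δm)ᴴ * (Δp - Δm) = (Δp + Δm)ᴴ * (Δp + Δm) := by
    rw [Matrix.conjTranspose_sub, Matrix.conjTranspose_add, hp.1, hm.1]
    rw [Matrix.sub_mul, Matrix.mul_sub, Matrix.mul_sub, Matrix.add_mul, Matrix.mul_add,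
      Matrix.mul_add, horth, horth']
    abel
  -- traceNorm (Δp - Δm) = 1
  have hTN1 : traceNorm (Δp - Δm) = 1 := by
    rw [← hJordan, traceNorm_rsmul _ (le_of_lt (inv_pos.mpr htpos)), ← ht,
      inv_mul_cancel₀ ht0]
  -- trace (Δp + Δm) = 1
  have hsum : Δp.trace + Δm.trace = 1 := by
    have h1 : (Δp + Δm).trace = (traceNorm (Δp + Δm) : ℂ) :=
      trace_eq_traceNorm (hp.add hm)
    have h2 : traceNorm (Δp + Δm) = traceNorm (Δp - Δm) := traceNorm_congr hsq.symm
    rw [Matrix.trace_add, h2, hTN1] at h1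
    simpa using h1
  -- trace (Δp - Δm) = 0
  have hdiff : Δp.trace - Δm.trace = 0 := by
    have := congrArg Matrix.trace hJordan
    rw [Matrix.trace_smul, Matrix.trace_sub, hρ.2, hσ.2, sub_self, smul_zero,
      Matrix.trace_sub] at this
    linear_combination -this
  have htp : Δp.trace = 1/2 := by linear_combination (hsum + hdiff)/2
  have htm : Δm.trace = 1/2 := by linear_combination (hsum - hdiff)/2
  have hkey : σ - ρ = t • Δp - t • Δm := by
    have := congrArg (fun M => t • M) hJordan
    simpa [smul_smul, mul_inv_cancel₀ ht0, smul_sub] using this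
  have hρσ : traceNorm (ρ - σ) = t := by
    rw [ht]
    refine traceNorm_congr ?_
    rw [Matrix.conjTranspose_sub, Matrix.conjTranspose_sub]
    noncomm_ring
  refine ⟨⟨posSemidef_rsmul hp (by norm_num), ?_⟩,
    ⟨posSemidef_rsmul hm (by norm_num), ?_⟩, ?_, ?_, ?_⟩
  · rw [Matrix.trace_smul, htp]; norm_num
  · rw [Matrix.trace_smul, htm]; norm_num
  · rw [Matrix.smul_mul, Matrix.mul_smul, horth, smul_zero, smul_zero]
  · rw [← smul_sub, traceNorm_rsmul _ (by norm_num : (0:ℝ) ≤ 2), hTN1]; norm_num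
  · rw [hρσ]
    have ht2 : t + 2 ≠ 0 := by positivity
    have hσeq : σ = ρ + (t • Δp - t • Δm) := by rw [← hkey]; abel
    rw [hσeq]
    match_scalars <;> field_simp <;> ring
end
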